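/- If N_n equals the palindromic concatenation (1/9)(f1·10^{2u1+u2} − (f1−f2)·10^{u1+u2} + (f1−f2)·10^{u1} − f1) with digits f1 ≠ f2, f1 ≥ 1, u1, u2 ≥ 1, and n ≥ 3, then (2u1+u2)·log 10 − 2 < n·log α < (2u1+u2)·log 10 + 1, where α is the real root of x^3 - x^2 - 1. -/
import Mathlib


def narayana : ℕ → ℕ
  | 0 => 0
  | 1 => 1
  | 2 => 1
  | n + 3 => narayana (n + 2) + narayana n

lemma nar_upper (α : ℝ) (hα : α ^ 3 = α ^ 2 + 1) (h1 : 1 ≤ α) :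
    ∀ n : ℕ, (narayana (n + 1) : ℝ) ≤ α ^ n := by
  intro n
  induction n using Nat.strong_induction_on with
  | _ n ih =>
    match n with
    | 0 => simp [narayana]
    | 1 => simpa [narayana] using h1
    | 2 =>
      have : narayana 3 = 1 := rfl
      rw [this]
      push_cast
      nlinarith
    | (m + 3) =>
      have hrec : narayana (m + 4) = narayana (m + 3) + narayana (m + 1) := rfl
      have h2 : (narayana (m + 3) : ℝ) ≤ α ^ (m + 2) := ih (m + 2) (by omega)
      have h3 : (narayana (m + 1) : ℝ) ≤ α ^ m := ih m (by omega)
      have hpow : α ^ (m + 3) = α ^ (m + 2) + α ^ m := by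
        have : α ^ (m + 3) = α ^ m * α ^ 3 := by ring
        rw [this, hα]; ring
      rw [hrec]
      push_cast
      rw [hpow]
      linarith

lemma nar_lower (α : ℝ) (hα : α ^ 3 = α ^ 2 + 1) (hαpos : 0 < α)
    (hle : α ≤ 733 / 500) :
    ∀ k : ℕ, (2 / 5 : ℝ) * α ^ (13 + k) ≤ narayana (13 + k) := by
  have hb : ∀ j : ℕ, α ^ j ≤ (733 / 500) ^ j := fun j =>
    pow_le_pow_left₀ hαpos.le hle j
  intro k
  induction k using Nat.strong_induction_on with
  | _ k ih =>
    match k with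
    | 0 =>
      have : narayana 13 = 60 := rfl
      rw [this]
      have := hb 13
      push_cast
      nlinarith [this]
    | 1 =>
      have : narayana 14 = 88 := rfl
      rw [this]
      have := hb 14
      push_cast
      nlinarith [this]
    | 2 =>
      have : narayana 15 = 129 := rfl
      rw [this]
      have := hb 15
      push_cast
      nlinarith [this]
    | (m + 3) =>
      have he2 : 13 + (m + 3) = (13 + m) + 3 := by omega
      rw [he2]
      have hrec : narayana ((13 + m) + 3) = narayana ((13 + m) + 2) + narayana (13 + m) := rfl
      have h2 : (2 / 5 : ℝ) * α ^ (13 + (m + 2)) ≤ narayana (13 + (m + 2)) :=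
        ih (m + 2) (by omega)
      have he1 : 13 + (m + 2) = (13 + m) + 2 := by omega
      rw [he1] at h2
      have h3 : (2 / 5 : ℝ) * α ^ (13 + m) ≤ narayana (13 + m) := ih m (by omega)
      rw [hrec]
      have hpow : α ^ ((13 + m) + 3) = α ^ ((13 + m) + 2) + α ^ (13 + m) := by
        have : α ^ ((13 + m) + 3) = α ^ (13 + m) * α ^ 3 := by ring
        rw [this, hα]; ring
      push_cast
      rw [hpow]
      linarith

lemma pal_bounds (A B N f1 f2 : ℤ) (hA : 10 ≤ A) (hB : 10 ≤ B)
    (hf1 : 1 ≤ f1) (hf1' : f1 ≤ 9) (hf2 : 0 ≤ f2) (hf2' : f2 ≤ 9)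
    (heq : 9 * N = f1 * (A * A * B) - (f1 - f2) * (A * B) + (f1 - f2) * A - f1) :
    A * A * B ≤ 10 * N ∧ N < A * A * B := by
  have hAB1 : (0:ℤ) ≤ (A - 10) * B := mul_nonneg (by linarith) (by linarith)
  have hAB2 : (0:ℤ) ≤ A * (B - 1) := mul_nonneg (by linarith) (by linarith)
  have hAB3 : (0:ℤ) ≤ (A - 10) * (B - 10) := mul_nonneg (by linarith) (by linarith)
  have hAB4 : (0:ℤ) < A * B := mul_pos (by linarith) (by linarith)
  constructor
  · nlinarith [mul_nonneg hAB2 hf2,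
      mul_nonneg hAB3 (by linarith : (0:ℤ) ≤ f1 - 1),
      mul_nonneg hAB1 (by linarith : (0:ℤ) ≤ f1 - 1)]
  · nlinarith [mul_nonneg hAB1 (by linarith : (0:ℤ) ≤ 9 - f1),
      mul_nonneg hAB2 (by linarith : (0:ℤ) ≤ 9 - f2)]

set_option maxHeartbeats 1000000 in
theorem narayana_size_relation (α : ℝ) (hα : α ^ 3 = α ^ 2 + 1) (hαpos : 0 < α)
    (n u1 u2 f1 f2 : ℕ)
    (hf1 : 1 ≤ f1) (hf1' : f1 ≤ 9) (hf2 : f2 ≤ 9) (hne : f1 ≠ f2)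
    (hu1 : 1 ≤ u1) (hu2 : 1 ≤ u2) (hn : 3 ≤ n)
    (heq : (9 * narayana n : ℤ) =
      f1 * 10 ^ (2 * u1 + u2) - ((f1 : ℤ) - f2) * 10 ^ (u1 + u2) +
      ((f1 : ℤ) - f2) * 10 ^ u1 - f1) :
    (2 * u1 + u2 : ℝ) * Real.log 10 - 2 < n * Real.log α ∧
    (n : ℝ) * Real.log α < (2 * u1 + u2 : ℝ) * Real.log 10 + 1 := by
  -- basic facts about α
  have hα1 : 1 < α := by nlinarith [sq_nonneg α, sq_nonneg (α - 1), sq_nonneg (α + 1)]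
  have hαle : α ≤ 733 / 500 := by
    nlinarith [sq_nonneg (α - 733 / 500), sq_nonneg (α + 733 / 500)]
  have hαge : (7 / 5 : ℝ) ≤ α := by
    nlinarith [sq_nonneg (α - 7 / 5), sq_nonneg (α + 7 / 5)]
  set L := 2 * u1 + u2 with hL
  have hA : (10 : ℤ) ≤ 10 ^ u1 := by
    calc (10:ℤ) = 10 ^ 1 := (pow_one 10).symm
    _ ≤ 10 ^ u1 := pow_le_pow_right₀ (by norm_num) hu1
  have hB : (10 : ℤ) ≤ 10 ^ u2 := by
    calc (10:ℤ) = 10 ^ 1 := (pow_one 10).symm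
    _ ≤ 10 ^ u2 := pow_le_pow_right₀ (by norm_num) hu2
  have hsplitL : (10 : ℤ) ^ L = 10 ^ u1 * 10 ^ u1 * 10 ^ u2 := by
    rw [hL, ← pow_add, ← pow_add]; ring_nf
  have hsplita : (10 : ℤ) ^ (u1 + u2) = 10 ^ u1 * 10 ^ u2 := by rw [← pow_add]
  have heq' : 9 * (narayana n : ℤ) =
      (f1 : ℤ) * (10 ^ u1 * 10 ^ u1 * 10 ^ u2) -
      ((f1 : ℤ) - f2) * (10 ^ u1 * 10 ^ u2) + ((f1 : ℤ) - f2) * 10 ^ u1 - f1 := by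
    rw [← hsplitL, ← hsplita]
    exact_mod_cast heq
  have hbounds := pal_bounds (10 ^ u1) (10 ^ u2) (narayana n) f1 f2 hA hB
    (by exact_mod_cast hf1) (by exact_mod_cast hf1') (by positivity)
    (by exact_mod_cast hf2) heq'
  have hupp : (narayana n : ℤ) < 10 ^ L := by rw [hsplitL]; exact hbounds.2
  have hlow : (10 : ℤ) ^ L ≤ 10 * narayana n := by rw [hsplitL]; exact hbounds.1
  -- move to the reals
  set x : ℝ := (narayana n : ℝ) with hx
  have hxupp : x < 10 ^ L := by
    have h : ((narayana n : ℤ) : ℝ) < (((10:ℤ) ^ L : ℤ) : ℝ) := by exact_mod_cast hupp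
    push_cast at h
    exact h
  have hxlow : (10 : ℝ) ^ L ≤ 10 * x := by
    have h : (((10:ℤ) ^ L : ℤ) : ℝ) ≤ ((10 * narayana n : ℤ) : ℝ) := by exact_mod_cast hlow
    push_cast at h
    exact h
  have hL3 : 3 ≤ L := by omega
  have hx100 : (100 : ℝ) ≤ x := by
    have h10L : (10 : ℝ) ^ 3 ≤ 10 ^ L := pow_le_pow_right₀ (by norm_num) hL3
    nlinarith
  -- n ≥ 13
  have hnub : x ≤ α ^ (n - 1) := by
    obtain ⟨m, rfl⟩ : ∃ m, n = m + 1 := ⟨n - 1, by omega⟩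
    simpa using nar_upper α hα hα1.le m
  have hn13 : 13 ≤ n := by
    by_contra h
    push_neg at h
    have h11 : n - 1 ≤ 11 := by omega
    have h1 : α ^ (n - 1) ≤ α ^ 11 := pow_le_pow_right₀ hα1.le h11
    have h2 : α ^ 11 ≤ (733 / 500 : ℝ) ^ 11 := pow_le_pow_left₀ hαpos.le hαle 11
    have h3 : ((733 : ℝ) / 500) ^ 11 < 100 := by norm_num
    linarith
  have hxlow' : (2 / 5 : ℝ) * α ^ n ≤ x := by
    obtain ⟨k, rfl⟩ : ∃ k, n = 13 + k := ⟨n - 13, by omega⟩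
    exact nar_lower α hα hαpos hαle k
  have hxpos : (0 : ℝ) < x := by linarith
  have hlog10 : (0 : ℝ) < Real.log 10 := Real.log_pos (by norm_num)
  have hlogα : (0 : ℝ) < Real.log α := Real.log_pos hα1
  have hcastL : ((L : ℕ) : ℝ) = (2 * u1 + u2 : ℝ) := by push_cast [hL]; ring
  have hexp1 : (2.7182818283 : ℝ) < Real.exp 1 := Real.exp_one_gt_d9
  constructor
  · -- lower bound
    obtain ⟨m, hm⟩ : ∃ m, n = m + 1 := ⟨n - 1, by omega⟩
    have hnub' : x ≤ α ^ m := by rw [hm] at hnub; simpa using hnub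
    have h1 : (10 : ℝ) ^ L ≤ 10 * α ^ m := by linarith
    have h2 : Real.log ((10 : ℝ) ^ L) ≤ Real.log (10 * α ^ m) :=
      Real.log_le_log (by positivity) h1
    rw [Real.log_pow, Real.log_mul (by norm_num) (by positivity), Real.log_pow] at h2
    -- need: log 10 < 2 + log α
    have hkey : Real.log 10 < 2 + Real.log α := by
      have h7 : Real.log (7 / 5 : ℝ) ≤ Real.log α := Real.log_le_log (by norm_num) hαge
      have hsplit : Real.log (10 : ℝ) = Real.log (50 / 7 : ℝ) + Real.log (7 / 5 : ℝ) := by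
        rw [← Real.log_mul (by norm_num) (by norm_num)]; norm_num
      have h50 : Real.log (50 / 7 : ℝ) < 2 := by
        rw [Real.log_lt_iff_lt_exp (by norm_num)]
        have : Real.exp 2 = Real.exp 1 * Real.exp 1 := by
          rw [← Real.exp_add]; norm_num
        rw [this]
        nlinarith
      linarith
    have goal' : (L : ℝ) * Real.log 10 - 2 < (n : ℝ) * Real.log α := by
      rw [hm]; push_cast
      linarith
    rw [hcastL] at goal'
    exact goal'
  · -- upper bound
    have h1 : α ^ n < (5 / 2 : ℝ) * 10 ^ L := by linarith
    have h2 : Real.log (α ^ n) < Real.log ((5 / 2 : ℝ) * 10 ^ L) :=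
      Real.log_lt_log (by positivity) h1
    rw [Real.log_pow, Real.log_mul (by norm_num) (by positivity), Real.log_pow] at h2
    have h52 : Real.log (5 / 2 : ℝ) < 1 := by
      rw [Real.log_lt_iff_lt_exp (by norm_num)]
      linarith
    have goal' : (n : ℝ) * Real.log α < (L : ℝ) * Real.log 10 + 1 := by
      linarith
    rw [hcastL] at goal'
    exact goal'
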